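/- Let τ_M > 0, τ_T > 0, a_M, a_T ∈ ℝ, t_f ∈ ℝ, and suppose Z : ℝ → ℝ satisfies Z′(s) = −τ_M·Ψ((t_f−s)/τ_M)·a_M + τ_T·Ψ((t_f−s)/τ_T)·a_T for all s in an interval I (both players apply the constant commands u_M = a_M, u_T = a_T). Then the function s ↦ Z(s) − ∂Z*(t_f − s) has zero derivative on I, hence is constant on I; in particular, if t_f ∈ I then Z(t_f) = Z(t) − ∂Z*(t_f − t) for every t ∈ I, so the equicost curves Z = c + ∂Z*(t_go) are invariant trajectories of the ZEM dynamics under saturated play. -/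

import Mathlib

/-- Ψ(θ) = exp(−θ) + θ − 1 -/
noncomputable def Psi (θ : ℝ) : ℝ := Real.exp (-θ) + θ - 1

/-- Υ(θ) = θ²/2 − exp(−θ) − θ + 1 -/
noncomputable def Upsilon (θ : ℝ) : ℝ := θ ^ 2 / 2 - Real.exp (-θ) - θ + 1

/-- The singular-region boundary ∂Z*(s) = a_M·τ_M²·Υ(s/τ_M) − a_T·τ_T²·Υ(s/τ_T). -/
noncomputable def singBdry (aM aT τM τT s : ℝ) : ℝ :=
  aM * τM ^ 2 * Upsilon (s / τM) - aT * τT ^ 2 * Upsilon (s / τT)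

lemma hasDerivAt_Upsilon (θ : ℝ) : HasDerivAt Upsilon (Psi θ) θ := by
  have h1 : HasDerivAt (fun θ : ℝ => θ ^ 2 / 2 - Real.exp (-θ) - θ + 1)
      (θ + Real.exp (-θ) - 1) θ := by
    have he : HasDerivAt (fun θ : ℝ => Real.exp (-θ)) (-Real.exp (-θ)) θ := by
      simpa [Function.comp_def] using (Real.hasDerivAt_exp (-θ)).comp θ ((hasDerivAt_id θ).neg)
    have hp : HasDerivAt (fun θ : ℝ => θ ^ 2 / 2) θ θ := by
      simpa using ((hasDerivAt_pow 2 θ).div_const 2)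
    simpa [sub_eq_add_neg] using (((hp.sub he).sub (hasDerivAt_id θ)).add_const 1)
  exact h1.congr_deriv (g' := Psi θ) (by rw [Psi]; ring)

lemma hasDerivAt_comp_Upsilon (tf τ : ℝ) (hτ : 0 < τ) (s : ℝ) :
    HasDerivAt (fun s => Upsilon ((tf - s) / τ)) (-(Psi ((tf - s) / τ) / τ)) s := by
  have hlin : HasDerivAt (fun s : ℝ => (tf - s) / τ) (-(1 / τ)) s := by
    simpa [neg_div] using (((hasDerivAt_id s).const_sub tf).div_const τ)
  simpa [div_eq_mul_inv, mul_comm, Function.comp_def] using (hasDerivAt_Upsilon ((tf - s) / τ)).comp s hlin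

theorem equicost_curves_invariant
    (τM τT aM aT tf : ℝ) (hτM : 0 < τM) (hτT : 0 < τT)
    (I : Set ℝ) (hI : Convex ℝ I) (Z : ℝ → ℝ)
    (hZ : ∀ s ∈ I,
      HasDerivAt Z (-τM * Psi ((tf - s) / τM) * aM + τT * Psi ((tf - s) / τT) * aT) s) :
    (∀ s ∈ I, HasDerivAt (fun s => Z s - singBdry aM aT τM τT (tf - s)) 0 s) ∧
    (∀ s ∈ I, ∀ t ∈ I,
      Z s - singBdry aM aT τM τT (tf - s) = Z t - singBdry aM aT τM τT (tf - t)) ∧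
    (tf ∈ I → ∀ t ∈ I, Z tf = Z t - singBdry aM aT τM τT (tf - t)) := by
  have hderiv : ∀ s ∈ I, HasDerivAt (fun s => Z s - singBdry aM aT τM τT (tf - s)) 0 s := by
    intro s hs
    have hB : HasDerivAt (fun s => singBdry aM aT τM τT (tf - s))
        (aM * τM ^ 2 * -(Psi ((tf - s) / τM) / τM)
          - aT * τT ^ 2 * -(Psi ((tf - s) / τT) / τT)) s := by
      exact ((hasDerivAt_comp_Upsilon tf τM hτM s).const_mul (aM * τM ^ 2)).sub
        ((hasDerivAt_comp_Upsilon tf τT hτT s).const_mul (aT * τT ^ 2))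
    have := (hZ s hs).sub hB
    refine this.congr_deriv ?_
    field_simp
    ring
  refine ⟨hderiv, ?_, ?_⟩
  · intro s hs t ht
    have key : ‖(Z t - singBdry aM aT τM τT (tf - t)) -
        (Z s - singBdry aM aT τM τT (tf - s))‖ ≤ 0 * ‖t - s‖ := by
      refine hI.norm_image_sub_le_of_norm_hasDerivWithin_le
        (f := fun s => Z s - singBdry aM aT τM τT (tf - s)) (f' := fun _ => (0 : ℝ))
        (fun x hx => (hderiv x hx).hasDerivWithinAt) (fun x _ => by simp) hs ht
    have h0 : Z t - singBdry aM aT τM τT (tf - t) - (Z s - singBdry aM aT τM τT (tf - s)) = 0 := by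
      simpa using key
    linarith
  · intro htf t ht
    have hconst : Z tf - singBdry aM aT τM τT (tf - tf) = Z t - singBdry aM aT τM τT (tf - t) := by
      have key : ‖(Z t - singBdry aM aT τM τT (tf - t)) -
          (Z tf - singBdry aM aT τM τT (tf - tf))‖ ≤ 0 * ‖t - tf‖ := by
        refine hI.norm_image_sub_le_of_norm_hasDerivWithin_le
          (f := fun s => Z s - singBdry aM aT τM τT (tf - s)) (f' := fun _ => (0 : ℝ))
          (fun x hx => (hderiv x hx).hasDerivWithinAt) (fun x _ => by simp) htf ht
      have h0 : Z t - singBdry aM aT τM τT (tf - t) -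
          (Z tf - singBdry aM aT τM τT 0) = 0 := by simpa using key
      simp only [sub_self]
      linarith
    have hz : singBdry aM aT τM τT (tf - tf) = 0 := by simp [singBdry, Upsilon]
    linarith
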